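/- arXiv:1302.2675 — 2 statements merged into one kernel-verified Lean document; each statement's English description precedes it below -/
import Mathlib

section
/- For every run DAG G and k ∈ ℕ, the function r^k is a ranking bounded by m = 2|Q\F|: every F-node receives an even rank, r^k is non-increasing along all edges of G, and all ranks are at most m. -/
/-- Strict lexicographic order on finite 0-1 profiles. -/
def ProfLt (a b : List Bool) : Prop := List.Lex (· < ·) a b

/-- Non-strict lexicographic order on finite 0-1 profiles. -/
def ProfLe (a b : List Bool) : Prop := a = b ∨ ProfLt a b

/-- A nondeterministic Büchi automaton on infinite words. -/
structure NBW (Q : Type) (σ : Type) where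
  init : Set Q
  trans : Q → σ → Set Q
  acc : Q → Bool

namespace NBW

variable {Q σ : Type} (A : NBW Q σ) (w : ℕ → σ)

/-- `(q,i)` is a vertex of the run DAG of `A` on `w`. -/
def InDag (v : Q × ℕ) : Prop :=
  ∃ p : ℕ → Q, p 0 ∈ A.init ∧ (∀ j, j < v.2 → p (j + 1) ∈ A.trans (p j) (w j)) ∧ p v.2 = v.1

/-- Edge of the run DAG. -/
def Edge (u v : Q × ℕ) : Prop :=
  A.InDag w u ∧ v.2 = u.2 + 1 ∧ v.1 ∈ A.trans u.1 (w u.2)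

/-- An infinite initial path through the (sub-)DAG with edge relation `E`. -/
def IsPath (E : Q × ℕ → Q × ℕ → Prop) (π : ℕ → Q × ℕ) : Prop :=
  (π 0).1 ∈ A.init ∧ (π 0).2 = 0 ∧ ∀ i, E (π i) (π (i + 1))

/-- An accepting path: initial and visiting F-nodes infinitely often. -/
def AcceptingPath (E : Q × ℕ → Q × ℕ → Prop) (π : ℕ → Q × ℕ) : Prop :=
  A.IsPath E π ∧ ∀ N, ∃ i, N ≤ i ∧ A.acc (π i).1 = true

/-- Profile (sequence of acceptance labels) of the first `i+1` states of `p`. -/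
def profileOf (p : ℕ → Q) (i : ℕ) : List Bool :=
  (List.range (i + 1)).map fun j => A.acc (p j)

/-- `p` encodes a finite initial run ending at node `v`. -/
def FinRunTo (p : ℕ → Q) (v : Q × ℕ) : Prop :=
  p 0 ∈ A.init ∧ (∀ j, j < v.2 → p (j + 1) ∈ A.trans (p j) (w j)) ∧ p v.2 = v.1

/-- `h` assigns to each node the lexicographically maximal profile
over all finite initial runs to it. -/
def IsProfileFun (h : Q × ℕ → List Bool) : Prop :=
  ∀ v, A.InDag w v →
    (∃ p, A.FinRunTo w p v ∧ A.profileOf p v.2 = h v) ∧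
    ∀ p, A.FinRunTo w p v → ProfLe (A.profileOf p v.2) (h v)

/-- Edges of the pruned DAG `G'`: only edges from predecessors of
lexicographically maximal profile are kept. -/
def Edge' (h : Q × ℕ → List Bool) (u v : Q × ℕ) : Prop :=
  A.Edge w u v ∧ ∀ u', A.Edge w u' v → ¬ ProfLt (h u) (h u')

/-- `v` is finite in `G'`: it has finitely many descendants in `G'`. -/
def FiniteIn' (h : Q × ℕ → List Bool) (v : Q × ℕ) : Prop :=
  Set.Finite {u | Relation.ReflTransGen (A.Edge' w h) v u}

/-- Vertices of `G''`: vertices of the run DAG that are not finite in `G'`. -/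
def InDag'' (h : Q × ℕ → List Bool) (v : Q × ℕ) : Prop :=
  A.InDag w v ∧ ¬ A.FiniteIn' w h v

/-- Edges of `G''`. -/
def Edge'' (h : Q × ℕ → List Bool) (u v : Q × ℕ) : Prop :=
  A.Edge' w h u v ∧ A.InDag'' w h u ∧ A.InDag'' w h v

/-- `lam` is the retrospective labeling `λ^k`: ⊤ at levels ≤ k, ⊥ on F-nodes
after level k, inherited along `G'`-edges otherwise. -/
def IsRetroLabeling (h : Q × ℕ → List Bool) (k : ℕ) (lam : Q × ℕ → Bool) : Prop :=
  (∀ u, A.InDag w u → u.2 ≤ k → lam u = true) ∧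
  (∀ u, A.InDag w u → k < u.2 → A.acc u.1 = true → lam u = false) ∧
  (∀ u v, k < v.2 → A.acc v.1 = false → A.Edge' w h u v → lam v = lam u)

/-- A labeling is legal when every ⊥-labeled node is finite in `G'`. -/
def Legal (h : Q × ℕ → List Bool) (lam : Q × ℕ → Bool) : Prop :=
  ∀ u, A.InDag w u → lam u = false → A.FiniteIn' w h u

/-- `α(u)`: the number of ⊤-labeled profile-equivalence classes on `u`'s level
whose profile is strictly greater than `h u`. -/
noncomputable def alphaCount (h : Q × ℕ → List Bool) (lam : Q × ℕ → Bool) (u : Q × ℕ) : ℕ :=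
  Set.ncard {p : List Bool | ∃ v, A.InDag w v ∧ v.2 = u.2 ∧ lam v = true ∧ h v = p ∧ ProfLt (h u) p}

/-- The `k`-retrospective ranking (with top rank `m`). -/
noncomputable def retroRank (h : Q × ℕ → List Bool) (lam : Q × ℕ → Bool) (k m : ℕ)
    (u : Q × ℕ) : ℕ :=
  if u.2 ≤ k then m
  else if lam u then 2 * A.alphaCount w h lam u + 1 else 2 * A.alphaCount w h lam u

/-- `m = 2 |Q \ F|`. -/
def mBound [Fintype Q] : ℕ :=
  2 * Finset.card (Finset.univ.filter fun q => A.acc q = false)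

end NBW

-- ===== auxiliary lemmas =====

theorem profLt_iff_lt {a b : List Bool} : ProfLt a b ↔ a < b := Iff.rfl
theorem profLe_iff_le {a b : List Bool} : ProfLe a b ↔ a ≤ b := Iff.rfl

theorem profLt_append {a b : List Bool} (hab : ProfLt a b) :
    a.length = b.length → ∀ c d : Bool, ProfLt (a ++ [c]) (b ++ [d]) := by
  induction hab with
  | nil => intro hlen; simp at hlen
  | cons h ih => intro hlen c d; exact List.Lex.cons (ih (by simpa using hlen) c d)
  | rel h => intro _ c d; exact List.Lex.rel h

theorem profLt_append_elim : ∀ {a b : List Bool}, a.length = b.length → ∀ {c d : Bool},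
    ProfLt (a ++ [c]) (b ++ [d]) → ProfLt a b ∨ (a = b ∧ c = false ∧ d = true) := by
  intro a
  induction a with
  | nil =>
    intro b hlen c d hcd
    cases b with
    | nil =>
      right
      refine ⟨rfl, ?_⟩
      have : c < d := by
        have h' : List.Lex (· < ·) [c] [d] := hcd
        exact (List.lex_singleton_iff _ _).mp h'
      simpa [Bool.lt_iff] using this
    | cons _ _ => simp at hlen
  | cons x xs ih =>
    intro b hlen c d hcd
    cases b with
    | nil => simp at hlen
    | cons y ys =>
      have hcd' : List.Lex (· < ·) (x :: (xs ++ [c])) (y :: (ys ++ [d])) := hcd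
      cases hcd' with
      | rel h => exact Or.inl (List.Lex.rel h)
      | cons h =>
        rcases ih (by simpa using hlen) h with h' | ⟨rfl, h2⟩
        · exact Or.inl (List.Lex.cons h')
        · exact Or.inr ⟨rfl, h2⟩

theorem profLe_append {a b : List Bool} (hlen : a.length = b.length) (hab : ProfLe a b)
    (c : Bool) : ProfLe (a ++ [c]) (b ++ [c]) := by
  rcases hab with rfl | h
  · exact Or.inl rfl
  · exact Or.inr (profLt_append h hlen c c)

namespace NBW

variable {Q σ : Type} (A : NBW Q σ) (w : ℕ → σ) (h : Q × ℕ → List Bool)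

theorem aux_profileOf_length (p : ℕ → Q) (i : ℕ) : (A.profileOf p i).length = i + 1 := by
  simp [NBW.profileOf]

theorem aux_profileOf_succ (p : ℕ → Q) (i : ℕ) :
    A.profileOf p (i + 1) = A.profileOf p i ++ [A.acc (p (i + 1))] := by
  simp [NBW.profileOf, List.range_succ]

theorem aux_profileOf_congr {p p' : ℕ → Q} (i : ℕ) (hp : ∀ j, j ≤ i → p j = p' j) :
    A.profileOf p i = A.profileOf p' i := by
  unfold NBW.profileOf
  apply List.map_congr_left
  intro j hj
  rw [hp j (by simpa [Nat.lt_succ_iff] using hj)]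

theorem aux_extend {u v : Q × ℕ} {p : ℕ → Q} (hp : A.FinRunTo w p u) (e : A.Edge w u v) :
    ∃ p', A.FinRunTo w p' v ∧ A.profileOf p' v.2 = A.profileOf p u.2 ++ [A.acc v.1] := by
  obtain ⟨h0, hstep, hend⟩ := hp
  obtain ⟨-, hlev, htr⟩ := e
  classical
  set p' : ℕ → Q := fun j => if j = u.2 + 1 then v.1 else p j with hp'
  have hagree : ∀ j, j ≤ u.2 → p j = p' j := by
    intro j hj
    simp only [hp']
    rw [if_neg (by omega)]
  have hpend : p' (u.2 + 1) = v.1 := by simp [hp']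
  refine ⟨p', ⟨?_, ?_, ?_⟩, ?_⟩
  · rw [← hagree 0 (Nat.zero_le _)]; exact h0
  · intro j hj
    rw [hlev] at hj
    rcases Nat.lt_succ_iff_lt_or_eq.mp hj with hj' | rfl
    · rw [← hagree j (by omega), ← hagree (j + 1) (by omega)]
      exact hstep j hj'
    · rw [hpend, ← hagree u.2 (le_refl _), hend]
      exact htr
  · rw [hlev, hpend]
  · rw [hlev, aux_profileOf_succ, hpend, aux_profileOf_congr A (p := p) (p' := p') u.2 hagree]

theorem aux_edge_inDag {u v : Q × ℕ} (e : A.Edge w u v) : A.InDag w v := by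
  obtain ⟨p, hp⟩ := e.1
  obtain ⟨p', hp', -⟩ := aux_extend A w hp e
  exact ⟨p', hp'⟩

theorem aux_pred {v : Q × ℕ} {p : ℕ → Q} (hp : A.FinRunTo w p v) {i : ℕ} (hi : v.2 = i + 1) :
    A.FinRunTo w p (p i, i) ∧ A.Edge w (p i, i) v := by
  obtain ⟨h0, hstep, hend⟩ := hp
  have hr : A.FinRunTo w p (p i, i) := ⟨h0, fun j hj => hstep j (by omega), rfl⟩
  refine ⟨hr, ⟨⟨p, hr⟩, hi, ?_⟩⟩
  have : p (i + 1) ∈ A.trans (p i) (w i) := hstep i (by omega)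
  rw [← hi, hend] at this
  exact this

theorem aux_h_length (hprof : A.IsProfileFun w h) {v : Q × ℕ} (hv : A.InDag w v) :
    (h v).length = v.2 + 1 := by
  obtain ⟨⟨p, hp, hpe⟩, -⟩ := hprof v hv
  rw [← hpe, aux_profileOf_length]

theorem aux_edge_le (hprof : A.IsProfileFun w h) {u v : Q × ℕ} (e : A.Edge w u v) :
    ProfLe (h u ++ [A.acc v.1]) (h v) := by
  obtain ⟨⟨p, hp, hpe⟩, -⟩ := hprof u e.1
  obtain ⟨p', hp', hprofeq⟩ := aux_extend A w hp e
  have := (hprof v (aux_edge_inDag A w e)).2 p' hp'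
  rwa [hprofeq, hpe] at this

theorem aux_edge'_eq (hprof : A.IsProfileFun w h) {u v : Q × ℕ} (e' : A.Edge' w h u v) :
    h v = h u ++ [A.acc v.1] := by
  have e := e'.1
  have hv : A.InDag w v := aux_edge_inDag A w e
  have hle1 : ProfLe (h u ++ [A.acc v.1]) (h v) := aux_edge_le A w h hprof e
  obtain ⟨⟨p, hp, hpe⟩, -⟩ := hprof v hv
  obtain ⟨hr, e2⟩ := aux_pred A w hp e.2.1
  have hle2 : ProfLe (A.profileOf p u.2) (h (p u.2, u.2)) := (hprof _ ⟨p, hr⟩).2 p hr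
  have hle3 : ProfLe (h (p u.2, u.2)) (h u) := by
    rw [profLe_iff_le]
    exact le_of_not_gt fun hc => e'.2 _ e2 (profLt_iff_lt.mpr hc)
  have hsplit : A.profileOf p v.2 = A.profileOf p u.2 ++ [A.acc v.1] := by
    rw [e.2.1, aux_profileOf_succ, ← e.2.1, hp.2.2]
  have hlen1 : (A.profileOf p u.2).length = (h (p u.2, u.2)).length := by
    rw [aux_profileOf_length, aux_h_length A w h hprof ⟨p, hr⟩]
  have hlen2 : (h (p u.2, u.2)).length = (h u).length := by
    rw [aux_h_length A w h hprof ⟨p, hr⟩, aux_h_length A w h hprof e.1]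
  have hle4 : ProfLe (h v) (h u ++ [A.acc v.1]) := by
    rw [← hpe, hsplit]
    exact profLe_iff_le.mpr (le_trans
      (profLe_iff_le.mp (profLe_append hlen1 hle2 _))
      (profLe_iff_le.mp (profLe_append hlen2 hle3 _)))
  exact le_antisymm (profLe_iff_le.mp hle4) (profLe_iff_le.mp hle1)

theorem aux_exists_edge' {v : Q × ℕ} [Fintype Q] (hv : A.InDag w v) (hv2 : 1 ≤ v.2) :
    ∃ u, A.Edge' w h u v ∧ u.2 + 1 = v.2 := by
  obtain ⟨i, hi⟩ : ∃ i, v.2 = i + 1 := ⟨v.2 - 1, by omega⟩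
  classical
  have hSfin : {u : Q × ℕ | A.Edge w u v}.Finite := by
    apply Set.Finite.subset (Set.finite_range (fun q : Q => (q, i)))
    rintro u hu
    refine ⟨u.1, ?_⟩
    have : u.2 = i := by have := hu.2.1; omega
    rw [← this]
  obtain ⟨p, hp⟩ := hv
  obtain ⟨-, e2⟩ := aux_pred A w hp hi
  have hne : hSfin.toFinset.Nonempty := ⟨(p i, i), by simp [Set.Finite.mem_toFinset]; exact e2⟩
  obtain ⟨u₀, hu₀, hmax⟩ := Finset.exists_max_image hSfin.toFinset (fun u => h u) hne
  rw [Set.Finite.mem_toFinset] at hu₀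
  refine ⟨u₀, ⟨hu₀, ?_⟩, by have := hu₀.2.1; omega⟩
  intro u' e'
  have : h u' ≤ h u₀ := hmax u' (by rwa [Set.Finite.mem_toFinset])
  exact fun hc => absurd (profLt_iff_lt.mp hc) (not_lt_of_ge this)

end NBW

namespace NBW

variable {Q σ : Type} (A : NBW Q σ) (w : ℕ → σ) (h : Q × ℕ → List Bool)

theorem aux_lam_congr [Fintype Q] (hprof : A.IsProfileFun w h) {k : ℕ} {lam : Q × ℕ → Bool}
    (hlam : A.IsRetroLabeling w h k lam) :
    ∀ i (u u' : Q × ℕ), A.InDag w u → A.InDag w u' → u.2 = i → u'.2 = i → h u = h u' →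
      lam u = lam u' := by
  intro i
  induction i using Nat.strong_induction_on with
  | _ i ih =>
    intro u u' hu hu' hui hu'i hh
    by_cases hk : i ≤ k
    · rw [hlam.1 u hu (hui ▸ hk), hlam.1 u' hu' (hu'i ▸ hk)]
    · push_neg at hk
      obtain ⟨t, ht, htlev⟩ := aux_exists_edge' A w h hu (by omega)
      obtain ⟨t', ht', ht'lev⟩ := aux_exists_edge' A w h hu' (by omega)
      have htd : A.InDag w t := ht.1.1
      have ht'd : A.InDag w t' := ht'.1.1
      have e1 : h u = h t ++ [A.acc u.1] := aux_edge'_eq A w h hprof ht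
      have e2 : h u' = h t' ++ [A.acc u'.1] := aux_edge'_eq A w h hprof ht'
      have hlen : (h t).length = (h t').length := by
        rw [aux_h_length A w h hprof htd, aux_h_length A w h hprof ht'd]; omega
      obtain ⟨hts, haccs⟩ := List.append_inj (by rw [← e1, ← e2, hh]) hlen
      have hacc : A.acc u.1 = A.acc u'.1 := by simpa using haccs
      by_cases ha : A.acc u.1 = true
      · rw [hlam.2.1 u hu (by omega) ha, hlam.2.1 u' hu' (by omega) (hacc ▸ ha)]
      · have ha' : A.acc u.1 = false := by simpa using ha
        have ha'' : A.acc u'.1 = false := hacc ▸ ha'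
        rw [hlam.2.2 t u (by omega) ha' ht, hlam.2.2 t' u' (by omega) ha'' ht']
        exact ih t.2 (by omega) t t' htd ht'd rfl (by omega) hts

theorem aux_card_le [Fintype Q] {k : ℕ} {lam : Q × ℕ → Bool}
    (hlam : A.IsRetroLabeling w h k lam) {i : ℕ} (hk : k < i) (S : Set (List Bool))
    (hS : ∀ p ∈ S, ∃ q : Q, A.InDag w (q, i) ∧ lam (q, i) = true ∧ h (q, i) = p) :
    S.ncard ≤ (Finset.univ.filter fun q => A.acc q = false).card := by
  classical
  rcases S.eq_empty_or_nonempty with rfl | ⟨p₀, hp₀⟩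
  · simp
  · choose f hf1 hf2 hf3 using hS
    set g : List Bool → Q := fun p => if hp : p ∈ S then f p hp else f p₀ hp₀ with hg
    have hmaps : ∀ p ∈ S, g p ∈ {q : Q | A.acc q = false} := by
      intro p hp
      simp only [hg, dif_pos hp, Set.mem_setOf_eq]
      by_contra hacc
      have hacc' : A.acc (f p hp) = true := by simpa using hacc
      have := hlam.2.1 (f p hp, i) (hf1 p hp) hk hacc'
      rw [hf2 p hp] at this
      simp at this
    have hinj : Set.InjOn g S := by
      intro p hp p' hp' hpp
      simp only [hg, dif_pos hp, dif_pos hp'] at hpp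
      rw [← hf3 p hp, ← hf3 p' hp', hpp]
    have hT : {q : Q | A.acc q = false} = ↑(Finset.univ.filter fun q => A.acc q = false) := by
      ext q; simp
    calc S.ncard ≤ {q : Q | A.acc q = false}.ncard :=
          Set.ncard_le_ncard_of_injOn g hmaps hinj (Set.toFinite _)
      _ = _ := by rw [hT, Set.ncard_coe_finset]

theorem aux_S_finite [Fintype Q] {lam : Q × ℕ → Bool} (u : Q × ℕ) :
    {p : List Bool | ∃ v, A.InDag w v ∧ v.2 = u.2 ∧ lam v = true ∧ h v = p ∧
      ProfLt (h u) p}.Finite := by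
  apply Set.Finite.subset (Set.finite_range (fun q : Q => h (q, u.2)))
  rintro p ⟨v', hv', hlev, -, hh, -⟩
  refine ⟨v'.1, ?_⟩
  show h (v'.1, u.2) = p
  rw [show (v'.1, u.2) = v' from by rw [← hlev], hh]

theorem aux_step [Fintype Q] (hprof : A.IsProfileFun w h) {k : ℕ} {lam : Q × ℕ → Bool}
    (hlam : A.IsRetroLabeling w h k lam) {u v : Q × ℕ} (e : A.Edge w u v) (hk : k < v.2) :
    ∀ p' ∈ {p : List Bool | ∃ v', A.InDag w v' ∧ v'.2 = v.2 ∧ lam v' = true ∧ h v' = p ∧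
        ProfLt (h v) p},
      ∃ q' ∈ {p : List Bool | ∃ u', A.InDag w u' ∧ u'.2 = u.2 ∧ lam u' = true ∧ h u' = p ∧
        ProfLt (h u) p}, p' = q' ++ [false] := by
  rintro p' ⟨v', hv'dag, hv'lev, hv'lam, hv'h, hv'lt⟩
  have hacc' : A.acc v'.1 = false := by
    by_contra hacc
    have hacc'' : A.acc v'.1 = true := by simpa using hacc
    have := hlam.2.1 v' hv'dag (by omega) hacc''
    rw [hv'lam] at this; simp at this
  have hlev' : v.2 = u.2 + 1 := e.2.1
  obtain ⟨t, ht, htlev⟩ := aux_exists_edge' A w h hv'dag (by omega)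
  have htdag : A.InDag w t := ht.1.1
  have hlamt : lam t = true := by
    rw [← hlam.2.2 t v' (by omega) hacc' ht]; exact hv'lam
  have heq : h v' = h t ++ [false] := by
    rw [aux_edge'_eq A w h hprof ht, hacc']
  have h1 : ProfLe (h u ++ [A.acc v.1]) (h v) := aux_edge_le A w h hprof e
  have h2 : ProfLt (h u ++ [A.acc v.1]) (h t ++ [false]) := by
    have hlt : ProfLt (h v) (h t ++ [false]) := by rw [← heq, hv'h]; exact hv'lt
    exact profLt_iff_lt.mpr (lt_of_le_of_lt (profLe_iff_le.mp h1) (profLt_iff_lt.mp hlt))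
  have hlen : (h u).length = (h t).length := by
    rw [aux_h_length A w h hprof e.1, aux_h_length A w h hprof htdag]; omega
  rcases profLt_append_elim hlen h2 with hlt | ⟨-, -, hff⟩
  · exact ⟨h t, ⟨t, htdag, by omega, hlamt, rfl, hlt⟩, by rw [← hv'h, heq]⟩
  · exact absurd hff (by simp)

end NBW

namespace NBW

variable {Q σ : Type} (A : NBW Q σ) (w : ℕ → σ) (h : Q × ℕ → List Bool)

theorem aux_step_total [Fintype Q] (hprof : A.IsProfileFun w h) {k : ℕ} {lam : Q × ℕ → Bool}
    (hlam : A.IsRetroLabeling w h k lam) {u v : Q × ℕ} (e : A.Edge w u v) (hk : k < v.2) :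
    ∃ g : List Bool → List Bool,
      ∀ p' ∈ {p : List Bool | ∃ v', A.InDag w v' ∧ v'.2 = v.2 ∧ lam v' = true ∧ h v' = p ∧
          ProfLt (h v) p},
        g p' ∈ {p : List Bool | ∃ u', A.InDag w u' ∧ u'.2 = u.2 ∧ lam u' = true ∧ h u' = p ∧
          ProfLt (h u) p} ∧ p' = g p' ++ [false] := by
  classical
  have hstep := aux_step A w h hprof hlam e hk
  have htot : ∀ p', ∃ q', p' ∈ {p : List Bool | ∃ v', A.InDag w v' ∧ v'.2 = v.2 ∧
      lam v' = true ∧ h v' = p ∧ ProfLt (h v) p} →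
      (q' ∈ {p : List Bool | ∃ u', A.InDag w u' ∧ u'.2 = u.2 ∧ lam u' = true ∧ h u' = p ∧
        ProfLt (h u) p} ∧ p' = q' ++ [false]) := by
    intro p'
    by_cases hp : p' ∈ {p : List Bool | ∃ v', A.InDag w v' ∧ v'.2 = v.2 ∧ lam v' = true ∧
        h v' = p ∧ ProfLt (h v) p}
    · obtain ⟨q', hq', heq⟩ := hstep p' hp
      exact ⟨q', fun _ => ⟨hq', heq⟩⟩
    · exact ⟨[], fun hc => absurd hc hp⟩
  choose g hg using htot
  exact ⟨g, fun p' hp' => hg p' hp'⟩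

theorem aux_alpha_mono [Fintype Q] (hprof : A.IsProfileFun w h) {k : ℕ} {lam : Q × ℕ → Bool}
    (hlam : A.IsRetroLabeling w h k lam) {u v : Q × ℕ} (e : A.Edge w u v) (hk : k < v.2) :
    A.alphaCount w h lam v ≤ A.alphaCount w h lam u := by
  obtain ⟨g, hg⟩ := aux_step_total A w h hprof hlam e hk
  unfold NBW.alphaCount
  apply Set.ncard_le_ncard_of_injOn g (fun p hp => (hg p hp).1) ?_ (aux_S_finite A w h u)
  intro p hp p' hp' hpp
  rw [(hg p hp).2, (hg p' hp').2, hpp]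

theorem aux_alpha_strict [Fintype Q] (hprof : A.IsProfileFun w h) {k : ℕ} {lam : Q × ℕ → Bool}
    (hlam : A.IsRetroLabeling w h k lam) {u v : Q × ℕ} (e : A.Edge w u v) (hk : k < v.2)
    (hlv : lam v = true) (hlu : lam u = false) :
    A.alphaCount w h lam v < A.alphaCount w h lam u := by
  have hdagv := aux_edge_inDag A w e
  have hdagu : A.InDag w u := e.1
  have haccv : A.acc v.1 = false := by
    by_contra hacc
    have hacc' : A.acc v.1 = true := by simpa using hacc
    have := hlam.2.1 v hdagv hk hacc'
    rw [hlv] at this; simp at this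
  have hlev : v.2 = u.2 + 1 := e.2.1
  obtain ⟨u₀, hu₀, hu₀lev⟩ := aux_exists_edge' A w h hdagv (by omega)
  have hdagu₀ : A.InDag w u₀ := hu₀.1.1
  have hlamu₀ : lam u₀ = true := by
    rw [← hlam.2.2 u₀ v (by omega) haccv hu₀]; exact hlv
  have hne : h u₀ ≠ h u := by
    intro hh
    have := aux_lam_congr A w h hprof hlam u.2 u₀ u hdagu₀ hdagu (by omega) rfl hh
    rw [hlamu₀, hlu] at this; simp at this
  have hveq : h v = h u₀ ++ [false] := by
    rw [aux_edge'_eq A w h hprof hu₀, haccv]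
  have hlenuu₀ : (h u).length = (h u₀).length := by
    rw [aux_h_length A w h hprof hdagu, aux_h_length A w h hprof hdagu₀]; omega
  have hult : ProfLt (h u) (h u₀) := by
    rcases aux_edge_le A w h hprof e with heq | hlt
    · exfalso
      rw [hveq] at heq
      exact hne ((List.append_inj heq hlenuu₀).1).symm
    · rw [hveq] at hlt
      rcases profLt_append_elim hlenuu₀ hlt with h' | ⟨heq', -, -⟩
      · exact h'
      · exact absurd heq'.symm hne
  have hmem : h u₀ ∈ {p : List Bool | ∃ u', A.InDag w u' ∧ u'.2 = u.2 ∧ lam u' = true ∧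
      h u' = p ∧ ProfLt (h u) p} := ⟨u₀, hdagu₀, by omega, hlamu₀, rfl, hult⟩
  obtain ⟨g, hg⟩ := aux_step_total A w h hprof hlam e hk
  have hinj : Set.InjOn g {p : List Bool | ∃ v', A.InDag w v' ∧ v'.2 = v.2 ∧ lam v' = true ∧
      h v' = p ∧ ProfLt (h v) p} := by
    intro p hp p' hp' hpp
    rw [(hg p hp).2, (hg p' hp').2, hpp]
  have himgfin := (aux_S_finite A w h (lam := lam) v).image g
  have hnot : h u₀ ∉ g '' {p : List Bool | ∃ v', A.InDag w v' ∧ v'.2 = v.2 ∧ lam v' = true ∧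
      h v' = p ∧ ProfLt (h v) p} := by
    rintro ⟨p', hp', hgp⟩
    have h1 : p' = h v := by rw [(hg p' hp').2, hgp, ← hveq]
    obtain ⟨-, -, -, -, -, hlt⟩ := hp'
    rw [h1] at hlt
    exact lt_irrefl _ (profLt_iff_lt.mp hlt)
  unfold NBW.alphaCount
  calc {p : List Bool | ∃ v', A.InDag w v' ∧ v'.2 = v.2 ∧ lam v' = true ∧ h v' = p ∧
        ProfLt (h v) p}.ncard
      = (g '' {p : List Bool | ∃ v', A.InDag w v' ∧ v'.2 = v.2 ∧ lam v' = true ∧ h v' = p ∧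
        ProfLt (h v) p}).ncard := (Set.ncard_image_of_injOn hinj).symm
    _ < (insert (h u₀) (g '' {p : List Bool | ∃ v', A.InDag w v' ∧ v'.2 = v.2 ∧ lam v' = true ∧
        h v' = p ∧ ProfLt (h v) p})).ncard := by
        rw [Set.ncard_insert_of_notMem hnot himgfin]; omega
    _ ≤ _ := by
        apply Set.ncard_le_ncard (Set.insert_subset hmem ?_) (aux_S_finite A w h u)
        rintro _ ⟨p', hp', rfl⟩
        exact (hg p' hp').1

theorem aux_alpha_le [Fintype Q] {k : ℕ} {lam : Q × ℕ → Bool}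
    (hlam : A.IsRetroLabeling w h k lam) {u : Q × ℕ} (hk : k < u.2) :
    A.alphaCount w h lam u ≤ (Finset.univ.filter fun q => A.acc q = false).card := by
  unfold NBW.alphaCount
  apply aux_card_le A w h hlam hk
  rintro p ⟨v', hv'dag, hv'lev, hv'lam, hv'h, -⟩
  refine ⟨v'.1, ?_, ?_, ?_⟩ <;> rw [show (v'.1, u.2) = v' from by rw [← hv'lev]]
  · exact hv'dag
  · exact hv'lam
  · exact hv'h

theorem aux_alpha_lt [Fintype Q] {k : ℕ} {lam : Q × ℕ → Bool}
    (hlam : A.IsRetroLabeling w h k lam) {u : Q × ℕ} (hu : A.InDag w u) (hk : k < u.2)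
    (hlu : lam u = true) :
    A.alphaCount w h lam u + 1 ≤ (Finset.univ.filter fun q => A.acc q = false).card := by
  have hnotmem : h u ∉ {p : List Bool | ∃ v, A.InDag w v ∧ v.2 = u.2 ∧ lam v = true ∧
      h v = p ∧ ProfLt (h u) p} := by
    rintro ⟨-, -, -, -, -, hlt⟩
    exact lt_irrefl _ (profLt_iff_lt.mp hlt)
  have hins : A.alphaCount w h lam u + 1 = (insert (h u) {p : List Bool | ∃ v, A.InDag w v ∧
      v.2 = u.2 ∧ lam v = true ∧ h v = p ∧ ProfLt (h u) p}).ncard := by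
    rw [Set.ncard_insert_of_notMem hnotmem (aux_S_finite A w h u)]
    rfl
  rw [hins]
  apply aux_card_le A w h hlam hk
  rintro p hp
  rcases hp with rfl | ⟨v', hv'dag, hv'lev, hv'lam, hv'h, -⟩
  · exact ⟨u.1, hu, hlu, rfl⟩
  · refine ⟨v'.1, ?_, ?_, ?_⟩ <;> rw [show (v'.1, u.2) = v' from by rw [← hv'lev]]
    · exact hv'dag
    · exact hv'lam
    · exact hv'h

end NBW

/-- `r^k` is a ranking bounded by `m = 2|Q \ F|`: F-nodes get even
ranks, ranks do not increase along edges of `G`, and ranks are at most `m`. -/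
theorem stmt15 {Q σ : Type} [Fintype Q] (A : NBW Q σ) (w : ℕ → σ) (h : Q × ℕ → List Bool)
    (hprof : A.IsProfileFun w h) (k : ℕ) (lam : Q × ℕ → Bool)
    (hlam : A.IsRetroLabeling w h k lam) :
    (∀ v, A.InDag w v → A.acc v.1 = true → Even (A.retroRank w h lam k (A.mBound) v)) ∧
    (∀ u v, A.Edge w u v →
      A.retroRank w h lam k (A.mBound) v ≤ A.retroRank w h lam k (A.mBound) u) ∧
    (∀ v, A.InDag w v → A.retroRank w h lam k (A.mBound) v ≤ A.mBound) := by
  have hbound : ∀ v, A.InDag w v → A.retroRank w h lam k A.mBound v ≤ A.mBound := by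
    intro v hv
    unfold NBW.retroRank
    split_ifs with h1 h2
    · exact le_refl _
    · push_neg at h1
      have := NBW.aux_alpha_lt A w h hlam hv h1 h2
      unfold NBW.mBound
      omega
    · push_neg at h1
      have := NBW.aux_alpha_le A w h hlam (u := v) h1
      unfold NBW.mBound
      omega
  refine ⟨?_, ?_, hbound⟩
  · intro v hv hacc
    unfold NBW.retroRank
    split_ifs with h1 h2
    · exact ⟨(Finset.univ.filter fun q => A.acc q = false).card, by unfold NBW.mBound; ring⟩
    · exfalso
      push_neg at h1
      have := hlam.2.1 v hv h1 hacc
      rw [h2] at this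
      simp at this
    · exact ⟨A.alphaCount w h lam v, by ring⟩
  · intro u v e
    have hdagu : A.InDag w u := e.1
    have hdagv : A.InDag w v := NBW.aux_edge_inDag A w e
    have hlev : v.2 = u.2 + 1 := e.2.1
    by_cases hv2 : v.2 ≤ k
    · have hu2 : u.2 ≤ k := by omega
      unfold NBW.retroRank
      rw [if_pos hu2, if_pos hv2]
    · by_cases hu2 : u.2 ≤ k
      · have : A.retroRank w h lam k A.mBound u = A.mBound := by
          unfold NBW.retroRank; rw [if_pos hu2]
        rw [this]
        exact hbound v hdagv
      · push_neg at hv2 hu2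
        have hmono := NBW.aux_alpha_mono A w h hprof hlam e hv2
        unfold NBW.retroRank
        rw [if_neg (show ¬ v.2 ≤ k by omega), if_neg (show ¬ u.2 ≤ k by omega)]
        by_cases hlv : lam v = true
        · by_cases hlu : lam u = true
          · simp only [hlv, hlu, if_true]; omega
          · have hlu' : lam u = false := by simpa using hlu
            have hstrict := NBW.aux_alpha_strict A w h hprof hlam e hv2 hlv hlu'
            simp only [hlv, hlu', if_true, Bool.false_eq_true, if_false]; omega
        · have hlv' : lam v = false := by simpa using hlv
          simp only [hlv', Bool.false_eq_true, if_false]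
          split_ifs <;> omega
end

section
/- The k-retrospective ranking is tight from level k+1 onward: for every level l > k, every odd number less than the maximal rank occurring on level l also occurs as a rank on level l. -/
instance : DecidableRel ProfLt := fun a b => List.Lex.decidableRel _ a b

lemma profLt_trichotomous' (a b : List Bool) : ProfLt a b ∨ a = b ∨ ProfLt b a :=
  trichotomous_of (List.Lex (· < ·)) a b

lemma profLt_irrefl' (a : List Bool) : ¬ ProfLt a a := irrefl_of (List.Lex (· < ·)) a

lemma profLt_trans' {a b c : List Bool} : ProfLt a b → ProfLt b c → ProfLt a c :=
  fun h1 h2 => lt_trans (α := List Bool) h1 h2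

/-- In a finite set of profiles, for each `t` below the cardinality there is an
element with exactly `t` elements strictly above it. -/
lemma count_above_surj (s : Finset (List Bool)) :
    ∀ t < s.card, ∃ p ∈ s, (s.filter fun q => ProfLt p q).card = t := by
  intro t ht
  have hcard : ∀ x : {x // x ∈ s}, (s.filter fun q => ProfLt x.1 q).card < s.card := by
    rintro ⟨x, hx⟩
    apply Finset.card_lt_card
    refine ⟨Finset.filter_subset _ _, fun hsub => ?_⟩
    exact profLt_irrefl' x (Finset.mem_filter.1 (hsub hx)).2
  let f : {x // x ∈ s} → Fin s.card := fun x => ⟨_, hcard x⟩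
  have key : ∀ a b : {x // x ∈ s}, ProfLt a.1 b.1 →
      (s.filter fun q => ProfLt b.1 q).card < (s.filter fun q => ProfLt a.1 q).card := by
    intro a b hab
    apply Finset.card_lt_card
    constructor
    · intro q hq
      have := Finset.mem_filter.1 hq
      exact Finset.mem_filter.2 ⟨this.1, profLt_trans' hab this.2⟩
    · intro hsub
      have hb : b.1 ∈ s.filter fun q => ProfLt a.1 q := Finset.mem_filter.2 ⟨b.2, hab⟩
      exact profLt_irrefl' b.1 (Finset.mem_filter.1 (hsub hb)).2
  have hinj : Function.Injective f := by
    intro x y hxy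
    have h1 : (s.filter fun q => ProfLt x.1 q).card = (s.filter fun q => ProfLt y.1 q).card :=
      congrArg Fin.val hxy
    rcases profLt_trichotomous' x.1 y.1 with hlt | heq | hlt
    · exact absurd h1.symm (key x y hlt).ne
    · exact Subtype.ext heq
    · exact absurd h1 (key y x hlt).ne
  have hbij : Function.Bijective f :=
    (Fintype.bijective_iff_injective_and_card f).2 ⟨hinj, by simp [Fintype.card_coe]⟩
  obtain ⟨x, hx⟩ := hbij.2 ⟨t, ht⟩
  exact ⟨x.1, x.2, congrArg Fin.val hx⟩

/-- `r^k` is tight from level `k+1` on: on every level `l > k`,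
every odd number below the maximal rank occurring on level `l` also occurs as a
rank on level `l`. -/
theorem stmt17 {Q σ : Type} [Fintype Q] (A : NBW Q σ) (w : ℕ → σ) (h : Q × ℕ → List Bool)
    (hprof : A.IsProfileFun w h) (k : ℕ) (lam : Q × ℕ → Bool)
    (hlam : A.IsRetroLabeling w h k lam) :
    ∀ l, k < l → ∀ j, Odd j →
      (∃ v, A.InDag w v ∧ v.2 = l ∧ j < A.retroRank w h lam k (A.mBound) v) →
      ∃ v, A.InDag w v ∧ v.2 = l ∧ A.retroRank w h lam k (A.mBound) v = j := by
  intro l hl j hj ⟨v, hv, hvl, hrank⟩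
  -- the set of profiles of ⊤-labeled nodes on level l
  set S : Set (List Bool) :=
    {p | ∃ u, A.InDag w u ∧ u.2 = l ∧ lam u = true ∧ h u = p} with hSdef
  have hSfin : S.Finite := by
    have : S ⊆ (fun q : Q => h (q, l)) '' Set.univ := by
      rintro p ⟨u, _, hul, _, hup⟩
      subst hul
      exact ⟨u.1, Set.mem_univ _, hup⟩
    exact Set.Finite.subset ((Set.finite_univ).image _) this
  set s : Finset (List Bool) := hSfin.toFinset with hsdef
  have hmem : ∀ p, p ∈ s ↔ ∃ u, A.InDag w u ∧ u.2 = l ∧ lam u = true ∧ h u = p := by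
    intro p; rw [hsdef, Set.Finite.mem_toFinset]; rfl
  -- alphaCount on level l equals the filter-count in s
  have halpha : ∀ u : Q × ℕ, u.2 = l →
      A.alphaCount w h lam u = (s.filter fun q => ProfLt (h u) q).card := by
    intro u hul
    show Set.ncard _ = _
    rw [← Set.ncard_coe_finset]
    congr 1
    ext p
    simp only [Finset.coe_filter, Set.mem_setOf_eq, hmem, hul]
    constructor
    · rintro ⟨x, hx1, hx2, hx3, hx4, hx5⟩; exact ⟨⟨x, hx1, hx2, hx3, hx4⟩, hx5⟩
    · rintro ⟨⟨x, hx1, hx2, hx3, hx4⟩, hx5⟩; exact ⟨x, hx1, hx2, hx3, hx4, hx5⟩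
  -- rank formula on level l
  have hnk : ∀ u : Q × ℕ, u.2 = l → ¬ u.2 ≤ k := fun u hul => by omega
  have hrankeq : ∀ u : Q × ℕ, u.2 = l → A.retroRank w h lam k (A.mBound) u =
      if lam u then 2 * A.alphaCount w h lam u + 1 else 2 * A.alphaCount w h lam u := by
    intro u hul
    unfold NBW.retroRank
    rw [if_neg (hnk u hul)]
  obtain ⟨t, ht⟩ := hj
  -- bound: t < s.card
  have hcle : (s.filter fun q => ProfLt (h v) q).card ≤ s.card := Finset.card_filter_le _ _
  have htlt : t < s.card := by
    rw [hrankeq v hvl] at hrank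
    by_cases hlv : lam v
    · rw [if_pos hlv, halpha v hvl] at hrank; omega
    · rw [if_neg hlv, halpha v hvl] at hrank; omega
  obtain ⟨p, hps, hpc⟩ := count_above_surj s t htlt
  obtain ⟨u, hu1, hu2, hu3, hu4⟩ := (hmem p).1 hps
  refine ⟨u, hu1, hu2, ?_⟩
  rw [hrankeq u hu2, if_pos hu3, halpha u hu2, hu4, hpc]
  omega
end
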